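/- Let H be a normal sublocal group of G with normalizing neighborhood V, and W a symmetric open neighborhood of 1 with W ⊆ U₆ and W⁶ ⊆ V. Give W/E_H the quotient topology with canonical map π_{H,W} : W → W/E_H; define ι_{H,W}(E_H(x)) := E_H(x⁻¹), Ω_{H,W} := (π_{H,W}×π_{H,W})((W×W) ∩ p⁻¹(W)), and p_{H,W}(E_H(x),E_H(y)) := E_H(xy) for representatives x,y of the local cosets with xy ∈ W. Then ι_{H,W} and p_{H,W} are well defined, (G/H)_W := (W/E_H, E_H(1), ι_{H,W}, p_{H,W}) is a local group, and π_{H,W} : G|W → (G/H)_W is a morphism of local groups. -/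

import Mathlib

open scoped Topology Manifold ENNReal

/-- A local group in the sense of Goldbring's "Hilbert's Fifth Problem for Local Groups":
a Hausdorff-intended topological space `G` with a distinguished element `one`, a partial
inversion `inv` defined (i.e. meaningful) on the open set `Lambda`, and a partial product
`mul` meaningful on the open set `Omega`. -/
structure LocalGroup (G : Type*) [TopologicalSpace G] where
  one : G
  Lambda : Set G
  Omega : Set (G × G)
  inv : G → G
  mul : G → G → G
  isOpen_Lambda : IsOpen Lambda
  isOpen_Omega : IsOpen Omega
  one_mem_Lambda : one ∈ Lambda
  pair_one_left : ∀ x : G, (one, x) ∈ Omega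
  pair_one_right : ∀ x : G, (x, one) ∈ Omega
  continuousOn_inv : ContinuousOn inv Lambda
  continuousOn_mul : ContinuousOn (fun q : G × G => mul q.1 q.2) Omega
  one_mul : ∀ x : G, mul one x = x
  mul_one : ∀ x : G, mul x one = x
  mem_inv_right : ∀ x ∈ Lambda, (x, inv x) ∈ Omega
  mem_inv_left : ∀ x ∈ Lambda, (inv x, x) ∈ Omega
  mul_inv_self : ∀ x ∈ Lambda, mul x (inv x) = one
  inv_mul_self : ∀ x ∈ Lambda, mul (inv x) x = one
  assoc : ∀ x y z : G, (x, y) ∈ Omega → (y, z) ∈ Omega → (mul x y, z) ∈ Omega →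
    (x, mul y z) ∈ Omega → mul (mul x y) z = mul x (mul y z)

namespace LocalGroup

variable {G : Type*} {G' : Type*} [TopologicalSpace G] [TopologicalSpace G']

/-- The standing conventions of the paper: `Λ = G`, and whenever `(g,h) ∈ Ω` also
`(h⁻¹, g⁻¹) ∈ Ω` with `(gh)⁻¹ = h⁻¹g⁻¹`. -/
def Std (L : LocalGroup G) : Prop :=
  L.Lambda = Set.univ ∧
    ∀ g h : G, (g, h) ∈ L.Omega →
      (L.inv h, L.inv g) ∈ L.Omega ∧ L.inv (L.mul g h) = L.mul (L.inv h) (L.inv g)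

/-- A symmetric subset: contained in the domain of inversion and stable under it. -/
def IsSymmetric (L : LocalGroup G) (S : Set G) : Prop :=
  S ⊆ L.Lambda ∧ L.inv '' S = S

/-- A subgroup of a local group. -/
def IsSubgroup (L : LocalGroup G) (H : Set G) : Prop :=
  L.one ∈ H ∧ H ⊆ L.Lambda ∧ (∀ x ∈ H, ∀ y ∈ H, (x, y) ∈ L.Omega) ∧
    (∀ x ∈ H, L.inv x ∈ H) ∧ ∀ x ∈ H, ∀ y ∈ H, L.mul x y ∈ H

/-- No small subgroups. -/
def NSS (L : LocalGroup G) : Prop :=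
  ∃ U ∈ 𝓝 L.one, ∀ H : Set G, L.IsSubgroup H → H ⊆ U → H = {L.one}

/-- No small connected subgroups. -/
def NSCS (L : LocalGroup G) : Prop :=
  ∃ U ∈ 𝓝 L.one, ∀ H : Set G, L.IsSubgroup H → IsConnected H → H ⊆ U → H = {L.one}

/-- `(a₁, …, aₙ)` represents `b`: all ways of multiplying the list are defined and equal `b`.
By convention the empty list represents `one`. -/
def Represents (L : LocalGroup G) : List G → G → Prop
  | [], b => b = L.one
  | [a], b => b = a
  | a :: c :: l, b =>
      ∀ i : ℕ, 1 ≤ i → i < (a :: c :: l).length →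
        ∃ b₁ b₂ : G, L.Represents ((a :: c :: l).take i) b₁ ∧
          L.Represents ((a :: c :: l).drop i) b₂ ∧ (b₁, b₂) ∈ L.Omega ∧ L.mul b₁ b₂ = b
termination_by l => l.length
decreasing_by
  all_goals simp only [List.length_cons, List.length_take, List.length_drop] at *
  all_goals omega

/-- `A^n`: all products of `n` elements of `A` (only meaningful when such products are defined). -/
def setPow (L : LocalGroup G) (A : Set G) (n : ℕ) : Set G :=
  {b | ∃ l : List G, l.length = n ∧ (∀ a ∈ l, a ∈ A) ∧ L.Represents l b}

/-- A chain `U₁ ⊇ U₂ ⊇ ⋯` of symmetric open neighborhoods of `1` such that products of `n`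
elements of `Uₙ` are defined (the sets `𝒰ₙ` of the paper). -/
def IsProdChain (L : LocalGroup G) (U : ℕ → Set G) : Prop :=
  ∀ n : ℕ, 1 ≤ n →
    IsOpen (U n) ∧ L.one ∈ U n ∧ L.IsSymmetric (U n) ∧ U (n + 1) ⊆ U n ∧
      ∀ l : List G, l.length = n → (∀ a ∈ l, a ∈ U n) → ∃ b, L.Represents l b

/-- `a^k` is defined and equal to `b`, for `k : ℤ` (with `a^(-n) := (a⁻¹)^n`). -/
def zpowRep (L : LocalGroup G) (a : G) : ℤ → G → Prop
  | Int.ofNat n, b => L.Represents (List.replicate n a) b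
  | Int.negSucc n, b => L.Represents (List.replicate (n + 1) (L.inv a)) b

/-- A special neighborhood (relative to a product chain `U`): a compact symmetric
neighborhood of `1` contained in `U 2`, containing no nontrivial subgroup, on which
squaring is injective. -/
def IsSpecialNbhd (L : LocalGroup G) (U : ℕ → Set G) (SU : Set G) : Prop :=
  IsCompact SU ∧ SU ∈ 𝓝 L.one ∧ L.IsSymmetric SU ∧ SU ⊆ U 2 ∧
    (∀ H : Set G, L.IsSubgroup H → H ⊆ SU → H = {L.one}) ∧
    ∀ x ∈ SU, ∀ y ∈ SU, L.mul x x = L.mul y y → x = y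

/-- `Λ_U` for the restriction `G|U`. -/
def restLambda (L : LocalGroup G) (U : Set G) : Set G := L.Lambda ∩ U ∩ L.inv ⁻¹' U

/-- `Ω_U` for the restriction `G|U`. -/
def restOmega (L : LocalGroup G) (U : Set G) : Set (G × G) :=
  {q | q ∈ L.Omega ∧ q.1 ∈ U ∧ q.2 ∈ U ∧ L.mul q.1 q.2 ∈ U}

/-- A morphism of local groups `L → L'`. -/
def IsMorphism (L : LocalGroup G) (L' : LocalGroup G') (f : G → G') : Prop :=
  Continuous f ∧ f L.one = L'.one ∧
    (∀ x ∈ L.Lambda, f x ∈ L'.Lambda ∧ f (L.inv x) = L'.inv (f x)) ∧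
    ∀ x y : G, (x, y) ∈ L.Omega → ((f x, f y) ∈ L'.Omega ∧ f (L.mul x y) = L'.mul (f x) (f y))

/-- `f` is a morphism of local groups `G|U → G'|U'` between restrictions. -/
def IsRestMorphism (L : LocalGroup G) (L' : LocalGroup G') (U : Set G) (U' : Set G')
    (f : G → G') : Prop :=
  ContinuousOn f U ∧ Set.MapsTo f U U' ∧ f L.one = L'.one ∧
    (∀ x ∈ L.restLambda U, f x ∈ L'.restLambda U' ∧ f (L.inv x) = L'.inv (f x)) ∧
    ∀ x y : G, (x, y) ∈ L.restOmega U →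
      ((f x, f y) ∈ L'.restOmega U' ∧ f (L.mul x y) = L'.mul (f x) (f y))

/-- Local isomorphism: a homeomorphism between open neighborhoods of the identities which
is a morphism of restrictions in both directions. -/
def LocallyIsomorphic (L : LocalGroup G) (L' : LocalGroup G') : Prop :=
  ∃ (U : Set G) (U' : Set G') (f : G → G') (g : G' → G),
    IsOpen U ∧ L.one ∈ U ∧ IsOpen U' ∧ L'.one ∈ U' ∧
      Set.BijOn f U U' ∧ (∀ x ∈ U, g (f x) = x) ∧ (∀ y ∈ U', f (g y) = y) ∧
      L.IsRestMorphism L' U U' f ∧ L'.IsRestMorphism L U' U g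

/-- A topological group regarded as a local group with `Λ = G` and `Ω = G × G`. -/
def ofGroup (H : Type*) [TopologicalSpace H] [Group H] [IsTopologicalGroup H] : LocalGroup H where
  one := 1
  Lambda := Set.univ
  Omega := Set.univ
  inv := fun x => x⁻¹
  mul := fun x y => x * y
  isOpen_Lambda := isOpen_univ
  isOpen_Omega := isOpen_univ
  one_mem_Lambda := trivial
  pair_one_left := fun _ => trivial
  pair_one_right := fun _ => trivial
  continuousOn_inv := continuous_inv.continuousOn
  continuousOn_mul := (continuous_fst.mul continuous_snd).continuousOn
  one_mul := fun x => _root_.one_mul x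
  mul_one := fun x => _root_.mul_one x
  mem_inv_right := fun _ _ => trivial
  mem_inv_left := fun _ _ => trivial
  mul_inv_self := fun x _ => mul_inv_cancel x
  inv_mul_self := fun x _ => inv_mul_cancel x
  assoc := fun x y z _ _ _ _ => mul_assoc x y z

/-- A bundled (finite-dimensional, real) Lie group in the Mathlib sense. -/
structure BundledLieGroup : Type 1 where
  n : ℕ
  carrier : Type
  [ts : TopologicalSpace carrier]
  [t2 : T2Space carrier]
  [grp : Group carrier]
  [tg : IsTopologicalGroup carrier]
  [cs : ChartedSpace (EuclideanSpace ℝ (Fin n)) carrier]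
  [lie : LieGroup (𝓡 n) (⊤ : ℕ∞) carrier]

/-- `L` is locally isomorphic to (the local group underlying) a Lie group. -/
def IsLieLocallyIsomorphic (L : LocalGroup G) : Prop :=
  ∃ B : BundledLieGroup,
    letI := B.ts; letI := B.grp; letI := B.tg
    L.LocallyIsomorphic (ofGroup B.carrier)

/-- A local one-parameter subgroup of `L`, with domain `(-r, r)` (where `r ∈ (0,∞]`). -/
structure LocalOnePS (L : LocalGroup G) where
  r : ℝ≥0∞
  r_pos : 0 < r
  toFun : ℝ → G
  mem_Lambda : ∀ t : ℝ, ENNReal.ofReal |t| < r → toFun t ∈ L.Lambda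
  continuousOn : ContinuousOn toFun {t : ℝ | ENNReal.ofReal |t| < r}
  add : ∀ s t : ℝ, ENNReal.ofReal |s| < r → ENNReal.ofReal |t| < r →
    ENNReal.ofReal |s + t| < r →
      (toFun s, toFun t) ∈ L.Omega ∧ toFun (s + t) = L.mul (toFun s) (toFun t)

variable {L : LocalGroup G}

/-- Equivalence (equality of germs at 0) of local one-parameter subgroups. -/
def OnePSEquiv (X Y : LocalOnePS L) : Prop :=
  ∃ s : ℝ, 0 < s ∧ ENNReal.ofReal s < X.r ∧ ENNReal.ofReal s < Y.r ∧
    ∀ t : ℝ, |t| < s → X.toFun t = Y.toFun t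

theorem onePS_exists_small (X : LocalOnePS L) : ∃ s : ℝ, 0 < s ∧ ENNReal.ofReal s < X.r := by
  rcases eq_or_ne X.r ⊤ with h | h
  · exact ⟨1, one_pos, by simp [h]⟩
  · have h0 : X.r ≠ 0 := ne_of_gt X.r_pos
    have htr : 0 < X.r.toReal := ENNReal.toReal_pos h0 h
    refine ⟨X.r.toReal / 2, by linarith, ?_⟩
    rw [ENNReal.ofReal_lt_iff_lt_toReal (by linarith) h]
    linarith

instance onePSSetoid (L : LocalGroup G) : Setoid (LocalOnePS L) where
  r := OnePSEquiv
  iseqv := by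
    constructor
    · intro X
      obtain ⟨s, hs, hsr⟩ := onePS_exists_small X
      exact ⟨s, hs, hsr, hsr, fun _ _ => rfl⟩
    · rintro X Y ⟨s, hs, h1, h2, h3⟩
      exact ⟨s, hs, h2, h1, fun t ht => (h3 t ht).symm⟩
    · rintro X Y Z ⟨s1, hs1, hX1, hY1, hag1⟩ ⟨s2, hs2, hY2, hZ2, hag2⟩
      refine ⟨min s1 s2, lt_min hs1 hs2, ?_, ?_, fun t ht => ?_⟩
      · exact lt_of_le_of_lt (ENNReal.ofReal_le_ofReal (min_le_left _ _)) hX1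
      · exact lt_of_le_of_lt (ENNReal.ofReal_le_ofReal (min_le_right _ _)) hZ2
      · rw [hag1 t (lt_of_lt_of_le ht (min_le_left _ _)),
          hag2 t (lt_of_lt_of_le ht (min_le_right _ _))]

/-- `L(G)`: the set of germs at `0` of local one-parameter subgroups of `L`. -/
abbrev LGQuot (L : LocalGroup G) := Quotient (onePSSetoid L)

/-- The trivial local one-parameter subgroup `O`. -/
noncomputable def constOnePS (L : LocalGroup G) : LocalOnePS L where
  r := ⊤
  r_pos := by simp
  toFun := fun _ => L.one
  mem_Lambda := fun _ _ => L.one_mem_Lambda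
  continuousOn := continuousOn_const
  add := fun s t _ _ _ => ⟨L.pair_one_left L.one, (L.one_mul L.one).symm⟩

/-- The domain of a germ of local one-parameter subgroups: the union of the domains of its
representatives. -/
def germDomain (L : LocalGroup G) (X : LGQuot L) : Set ℝ :=
  {t | ∃ Y : LocalOnePS L, ⟦Y⟧ = X ∧ ENNReal.ofReal |t| < Y.r}

/-- Evaluation of a germ at a point of its domain (junk value outside). This is
well defined, i.e. independent of the choice of representative, by the basic theory
of local one-parameter subgroups. -/
noncomputable def germEval (L : LocalGroup G) (X : LGQuot L) (t : ℝ) : G := by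
  classical exact if h : ∃ Y : LocalOnePS L, ⟦Y⟧ = X ∧ ENNReal.ofReal |t| < Y.r then h.choose.toFun t
  else L.one

/-- The topology on `L(G)` generated by the subbasic sets `B_{C,U}` for `C ⊆ (-2,2)`
compact and `U ⊆ G` open. -/
instance germTopology (L : LocalGroup G) : TopologicalSpace (LGQuot L) :=
  TopologicalSpace.generateFrom
    {S | ∃ (C : Set ℝ) (U : Set G), IsCompact C ∧ C ⊆ Set.Ioo (-2 : ℝ) 2 ∧ IsOpen U ∧
      S = {X : LGQuot L | C ⊆ germDomain L X ∧ ∀ t ∈ C, germEval L X t ∈ U}}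

/-- A sublocal group `H` of `L`, with associated neighborhood `V`. -/
def IsSublocalGroup (L : LocalGroup G) (H V : Set G) : Prop :=
  L.one ∈ H ∧ IsOpen V ∧ L.one ∈ V ∧ H ⊆ V ∧ (∀ x ∈ closure H, x ∈ V → x ∈ H) ∧
    (∀ x ∈ H, x ∈ L.Lambda → L.inv x ∈ V → L.inv x ∈ H) ∧
    ∀ x ∈ H, ∀ y ∈ H, (x, y) ∈ L.Omega → L.mul x y ∈ V → L.mul x y ∈ H

/-- A normal sublocal group `H` of `L`, with normalizing neighborhood `V`. -/
def IsNormalSublocalGroup (L : LocalGroup G) (H V : Set G) : Prop :=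
  L.IsSublocalGroup H V ∧ L.IsSymmetric V ∧
    ∀ y ∈ V, ∀ x ∈ H, ∀ b : G, L.Represents [y, x, L.inv y] b → b ∈ V → b ∈ H

/-- The coset relation `E_H` on `W`. -/
def quotRel (L : LocalGroup G) (H W : Set G) : ↥W → ↥W → Prop :=
  fun x y => L.mul (L.inv ↑x) ↑y ∈ H

/-- The local coset space `W/E_H`, with the quotient topology. -/
abbrev QuotCarrier (L : LocalGroup G) (H W : Set G) := Quot (L.quotRel H W)

/-- `Q` is the local quotient group structure `(G/H)_W` on `W/E_H`. -/
def IsQuotStructure (L : LocalGroup G) (H W : Set G) (h1W : L.one ∈ W)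
    (Q : LocalGroup (L.QuotCarrier H W)) : Prop :=
  Q.one = Quot.mk (L.quotRel H W) ⟨L.one, h1W⟩ ∧
    Q.Lambda = Set.univ ∧
    (∀ (x : ↥W) (hx : L.inv ↑x ∈ W),
      Q.inv (Quot.mk (L.quotRel H W) x) = Quot.mk (L.quotRel H W) ⟨L.inv ↑x, hx⟩) ∧
    Q.Omega = {q | ∃ x y : ↥W, ((x : G), (y : G)) ∈ L.Omega ∧ L.mul ↑x ↑y ∈ W ∧
      q = (Quot.mk (L.quotRel H W) x, Quot.mk (L.quotRel H W) y)} ∧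
    ∀ (x y : ↥W) (_ : ((x : G), (y : G)) ∈ L.Omega) (hm : L.mul ↑x ↑y ∈ W),
      Q.mul (Quot.mk (L.quotRel H W) x) (Quot.mk (L.quotRel H W) y) =
        Quot.mk (L.quotRel H W) ⟨L.mul ↑x ↑y, hm⟩

/-- The sup-norm of a real-valued function. -/
noncomputable def supNorm (f : G → ℝ) : ℝ := ⨆ x : G, |f x|

/-- `W²` = the set of products of two elements of `W`. -/
def sqSet (L : LocalGroup G) (W : Set G) : Set G :=
  {z | ∃ a ∈ W, ∃ b ∈ W, (a, b) ∈ L.Omega ∧ L.mul a b = z}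

/-- The (left-translation) action `a · f` of `a` on functions supported in `W`:
`(a·f)(x) = f (a⁻¹ x)` for `x ∈ W²` and `0` otherwise. -/
noncomputable def act (L : LocalGroup G) (W : Set G) (a : G) (f : G → ℝ) : G → ℝ := by
  classical exact fun x => if x ∈ L.sqSet W then f (L.mul (L.inv a) x) else 0

/-- `ord(x) ≥ n` relative to the special neighborhood `SU`: all powers `x^k`, `|k| ≤ n`,
are defined and lie in `SU`. -/
def ordGE (L : LocalGroup G) (SU : Set G) (n : ℕ) : Set G :=
  {x | ∀ k : ℤ, k.natAbs ≤ n → ∃ b : G, L.zpowRep x k b ∧ b ∈ SU}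

end LocalGroup

open LocalGroup

namespace LocalGroup
variable {G : Type*} [TopologicalSpace G] {L : LocalGroup G}

theorem repr_nil {b : G} (h : L.Represents [] b) : b = L.one := by rwa [Represents] at h

theorem repr_one : L.Represents [] L.one := by rw [Represents]

theorem repr_single {a b : G} (h : L.Represents [a] b) : b = a := by rwa [Represents] at h

theorem repr_single' (a : G) : L.Represents [a] a := by rw [Represents]

theorem repr_split {l : List G} {b : G} (h : L.Represents l b) (i : ℕ) (h1 : 1 ≤ i)
    (h2 : i < l.length) :
    ∃ b₁ b₂ : G, L.Represents (l.take i) b₁ ∧ L.Represents (l.drop i) b₂ ∧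
      (b₁, b₂) ∈ L.Omega ∧ L.mul b₁ b₂ = b := by
  match l with
  | [] => simp at h2
  | [a] => simp at h2; omega
  | a :: c :: t => rw [Represents] at h; exact h i h1 h2

theorem repr_of_splits {l : List G} (hl : 2 ≤ l.length) {b : G}
    (h : ∀ i : ℕ, 1 ≤ i → i < l.length →
      ∃ b₁ b₂ : G, L.Represents (l.take i) b₁ ∧ L.Represents (l.drop i) b₂ ∧
        (b₁, b₂) ∈ L.Omega ∧ L.mul b₁ b₂ = b) : L.Represents l b := by
  match l with
  | [] => simp at hl
  | [a] => simp at hl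
  | a :: c :: t => rw [Represents]; exact h

theorem repr_unique : ∀ {l : List G} {b b' : G},
    L.Represents l b → L.Represents l b' → b = b' := by
  intro l
  induction l with
  | nil => intro b b' h h'; rw [repr_nil h, repr_nil h']
  | cons a t ih =>
    intro b b' h h'
    cases t with
    | nil => rw [repr_single h, repr_single h']
    | cons c t' =>
      obtain ⟨b1, b2, hb1, hb2, _, hm⟩ := repr_split h 1 le_rfl (by simp)
      obtain ⟨b1', b2', hb1', hb2', _, hm'⟩ := repr_split h' 1 le_rfl (by simp)
      simp only [List.take_succ_cons, List.take_zero, List.drop_succ_cons,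
        List.drop_zero] at hb1 hb2 hb1' hb2'
      rw [← hm, ← hm', repr_single hb1, repr_single hb1', ih hb2 hb2']

theorem repr_merge {l1 l2 : List G} {b b1 b2 : G} (h : L.Represents (l1 ++ l2) b)
    (h1 : L.Represents l1 b1) (h2 : L.Represents l2 b2) :
    (b1, b2) ∈ L.Omega ∧ L.mul b1 b2 = b := by
  rcases l1.eq_nil_or_concat.symm.imp_right (fun e => e) with h1e | h1e
  case inr =>
    subst h1e
    rw [repr_nil h1, List.nil_append] at *
    exact ⟨L.pair_one_left b2, by rw [L.one_mul, repr_unique h h2]⟩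
  rcases eq_or_ne l2 [] with h2e | h2e
  · subst h2e
    rw [repr_nil h2, List.append_nil] at *
    exact ⟨L.pair_one_right b1, by rw [L.mul_one, repr_unique h h1]⟩
  have hl1 : 1 ≤ l1.length := by
    obtain ⟨a, c, rfl⟩ := h1e; simp
  have hl2 : 1 ≤ l2.length := List.length_pos_iff.mpr h2e
  obtain ⟨c1, c2, hc1, hc2, hO, hm⟩ := repr_split h l1.length hl1 (by simp; omega)
  rw [List.take_left] at hc1
  rw [List.drop_left] at hc2
  rw [repr_unique h1 hc1, repr_unique h2 hc2]
  exact ⟨hO, hm⟩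

theorem repr_pair {a b : G} (h : (a, b) ∈ L.Omega) : L.Represents [a, b] (L.mul a b) := by
  refine repr_of_splits (by simp) fun i hi hi' => ?_
  have : i = 1 := by simp at hi'; omega
  subst this
  exact ⟨a, b, repr_single' a, repr_single' b, h, rfl⟩

theorem repr_pair_elim {a b c : G} (h : L.Represents [a, b] c) :
    (a, b) ∈ L.Omega ∧ L.mul a b = c :=
  repr_merge (l1 := [a]) (l2 := [b]) h (repr_single' a) (repr_single' b)

theorem repr_triple {a b c r : G} (hab : (a, b) ∈ L.Omega) (hbc : (b, c) ∈ L.Omega)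
    (h1 : (L.mul a b, c) ∈ L.Omega) (h2 : (a, L.mul b c) ∈ L.Omega)
    (e1 : L.mul (L.mul a b) c = r) (e2 : L.mul a (L.mul b c) = r) :
    L.Represents [a, b, c] r := by
  refine repr_of_splits (by simp) fun i hi hi' => ?_
  simp only [List.length_cons, List.length_nil] at hi'
  interval_cases i
  · exact ⟨a, L.mul b c, repr_single' a, repr_pair hbc, h2, e2⟩
  · exact ⟨L.mul a b, c, repr_pair hab, repr_single' c, h1, e1⟩

theorem repr_append_one : ∀ (n : ℕ) (l : List G) (b : G), l.length ≤ n →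
    L.Represents l b → L.Represents (l ++ [L.one]) b := by
  intro n
  induction n with
  | zero =>
    intro l b hl h
    rw [List.length_eq_zero_iff.mp (Nat.le_zero.mp hl)] at h ⊢
    rw [repr_nil h]
    exact repr_single' L.one
  | succ n ih =>
    intro l b hl h
    rcases eq_or_ne l [] with rfl | hne
    · rw [repr_nil h]; exact repr_single' L.one
    have hl1 : 1 ≤ l.length := List.length_pos_iff.mpr hne
    refine repr_of_splits (by simp; omega) fun i hi hi' => ?_
    simp only [List.length_append, List.length_cons, List.length_nil] at hi'
    rcases eq_or_lt_of_le (by omega : i ≤ l.length) with rfl | hlt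
    · rw [List.take_left, List.drop_left]
      exact ⟨b, L.one, h, repr_single' L.one, L.pair_one_right b, L.mul_one b⟩
    · obtain ⟨b1, b2, hb1, hb2, hO, hm⟩ := repr_split h i hi hlt
      rw [List.take_append_of_le_length (by omega), List.drop_append_of_le_length (by omega)]
      refine ⟨b1, b2, hb1, ih _ b2 (by simp; omega) hb2, hO, hm⟩


section Ctx
variable {Un : ℕ → Set G} {H V W : Set G}

theorem aux_lam (hstd : L.Std) (x : G) : x ∈ L.Lambda := by rw [hstd.1]; trivial

theorem aux_invW (hWsym : L.IsSymmetric W) {a : G} (ha : a ∈ W) : L.inv a ∈ W := by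
  have := Set.mem_image_of_mem L.inv ha
  rwa [hWsym.2] at this

theorem aux_ex (hUn : L.IsProdChain Un) (hW6 : W ⊆ Un 6)
    {l : List G} (hl : ∀ a ∈ l, a ∈ W) (hlen : l.length ≤ 6) :
    ∃ b : G, L.Represents l b := by
  rcases eq_or_ne l [] with rfl | hne
  · exact ⟨L.one, repr_one⟩
  have h1 : 1 ≤ l.length := List.length_pos_iff.mpr hne
  have hsub : W ⊆ Un l.length := by
    have step : ∀ k : ℕ, 1 ≤ k → k ≤ 6 → Un 6 ⊆ Un k := by
      intro k hk1 hk6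
      have chain : ∀ m : ℕ, 1 ≤ m → Un (m + 1) ⊆ Un m := fun m hm => (hUn m hm).2.2.2.1
      interval_cases k
      · exact ((((( chain 1 (by norm_num)).trans' (chain 2 (by norm_num))).trans'
          (chain 3 (by norm_num))).trans' (chain 4 (by norm_num))).trans'
          (chain 5 (by norm_num)))
      · exact (((chain 2 (by norm_num)).trans' (chain 3 (by norm_num))).trans'
          (chain 4 (by norm_num))).trans' (chain 5 (by norm_num))
      · exact ((chain 3 (by norm_num)).trans' (chain 4 (by norm_num))).trans'
          (chain 5 (by norm_num))
      · exact (chain 4 (by norm_num)).trans' (chain 5 (by norm_num))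
      · exact chain 5 (by norm_num)
      · exact subset_rfl
    exact hW6.trans (step l.length h1 hlen)
  exact (hUn l.length h1).2.2.2.2 l rfl fun a ha => hsub (hl a ha)

theorem aux_V (h1W : L.one ∈ W) (hWpow : L.setPow W 6 ⊆ V)
    {l : List G} (hl : ∀ a ∈ l, a ∈ W) (hlen : l.length ≤ 6) {b : G}
    (h : L.Represents l b) : b ∈ V := by
  have key : ∀ k : ℕ, ∀ l : List G, (∀ a ∈ l, a ∈ W) → l.length + k = 6 →
      L.Represents l b → b ∈ V := by
    intro k
    induction k with
    | zero =>
      intro l hl hlen h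
      exact hWpow ⟨l, by omega, hl, h⟩
    | succ k ih =>
      intro l hl hlen h
      refine ih (l ++ [L.one]) ?_ (by simp; omega) (repr_append_one 6 l b (by omega) h)
      intro a ha
      rcases List.mem_append.mp ha with ha | ha
      · exact hl a ha
      · simp at ha; subst ha; exact h1W
  exact key (6 - l.length) l hl (by omega) h

theorem aux_pairW (hUn : L.IsProdChain Un) (hW6 : W ⊆ Un 6)
    {a b : G} (ha : a ∈ W) (hb : b ∈ W) : (a, b) ∈ L.Omega := by
  obtain ⟨c, hc⟩ := aux_ex hUn hW6 (l := [a, b]) (by simp [ha, hb]) (by simp)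
  exact (repr_pair_elim hc).1

theorem aux_inv_inv (hstd : L.Std) (x : G) : L.inv (L.inv x) = x := by
  have h1 := L.mem_inv_right x (aux_lam hstd x)
  have h2 := L.mem_inv_right (L.inv x) (aux_lam hstd _)
  have h3 : (L.mul x (L.inv x), L.inv (L.inv x)) ∈ L.Omega := by
    rw [L.mul_inv_self x (aux_lam hstd x)]; exact L.pair_one_left _
  have h4 : (x, L.mul (L.inv x) (L.inv (L.inv x))) ∈ L.Omega := by
    rw [L.mul_inv_self (L.inv x) (aux_lam hstd _)]; exact L.pair_one_right _
  have := L.assoc x (L.inv x) (L.inv (L.inv x)) h1 h2 h3 h4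
  rwa [L.mul_inv_self x (aux_lam hstd x), L.mul_inv_self (L.inv x) (aux_lam hstd _),
    L.one_mul, L.mul_one] at this

theorem aux_inv_one (hstd : L.Std) : L.inv L.one = L.one := by
  have := L.mul_inv_self L.one (aux_lam hstd _)
  rwa [L.one_mul] at this

theorem aux_cancel (hstd : L.Std) (hUn : L.IsProdChain Un) (hWsym : L.IsSymmetric W)
    (hW6 : W ⊆ Un 6) {l1 l2 : List G} {a b b' : G}
    (hl1 : ∀ x ∈ l1, x ∈ W) (hl2 : ∀ x ∈ l2, x ∈ W) (ha : a ∈ W)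
    (hlen : l1.length + l2.length ≤ 4)
    (h : L.Represents (l1 ++ a :: L.inv a :: l2) b) (h' : L.Represents (l1 ++ l2) b') :
    b = b' := by
  obtain ⟨c1, hc1⟩ := aux_ex hUn hW6 hl1 (by omega)
  obtain ⟨c2, hc2⟩ := aux_ex hUn hW6 hl2 (by omega)
  have hrep2 : L.Represents ([a, L.inv a] ++ l2) (L.mul L.one c2) := by
    obtain ⟨d, hd⟩ := aux_ex hUn hW6 (l := [a, L.inv a] ++ l2)
      (by intro x hx; rcases List.mem_append.mp hx with hx | hx
          · simp at hx; rcases hx with rfl | rfl; exacts [ha, aux_invW hWsym ha]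
          · exact hl2 x hx) (by simp; omega)
    have hp : L.Represents [a, L.inv a] L.one := by
      have := repr_pair (L.mem_inv_right a (aux_lam hstd a))
      rwa [L.mul_inv_self a (aux_lam hstd a)] at this
    have h2 := repr_merge hd hp hc2
    rw [h2.2]
    exact hd
  rw [L.one_mul] at hrep2
  have e1 := repr_merge (l1 := l1) (l2 := [a, L.inv a] ++ l2) h hc1 hrep2
  have e2 := repr_merge h' hc1 hc2
  rw [← e1.2, ← e2.2]

theorem aux_conj (hstd : L.Std) (hUn : L.IsProdChain Un) (hHV : L.IsNormalSublocalGroup H V)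
    (h1W : L.one ∈ W) (hWsym : L.IsSymmetric W) (hW6 : W ⊆ Un 6) (hWpow : L.setPow W 6 ⊆ V)
    {l : List G} {y h c : G} (hy : y ∈ W) (hl : ∀ x ∈ l, x ∈ W)
    (hlen : l.length ≤ 4) (hrep : L.Represents l h) (hmem : h ∈ H)
    (hfull : L.Represents (y :: l ++ [L.inv y]) c) : c ∈ H := by
  have hyV : y ∈ V := aux_V h1W hWpow (l := [y]) (by simp [hy]) (by simp) (repr_single' y)
  have hcV : c ∈ V := aux_V h1W hWpow (l := y :: l ++ [L.inv y])
    (by intro x hx; simp at hx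
        rcases hx with rfl | hx | rfl
        exacts [hy, hl x hx, aux_invW hWsym hy]) (by simp; omega) hfull
  have hinvy : L.inv y ∈ W := aux_invW hWsym hy
  obtain ⟨e1, he1⟩ := aux_ex hUn hW6 (l := y :: l)
    (by intro x hx; simp at hx; rcases hx with rfl | hx; exacts [hy, hl x hx]) (by simp; omega)
  obtain ⟨e2, he2⟩ := aux_ex hUn hW6 (l := l ++ [L.inv y])
    (by intro x hx; rcases List.mem_append.mp hx with hx | hx
        · exact hl x hx
        · simp at hx; subst hx; exact hinvy) (by simp; omega)
  have m1 := repr_merge (l1 := [y]) (l2 := l) he1 (repr_single' y) hrep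
  have m2 := repr_merge (l1 := l) (l2 := [L.inv y]) he2 hrep (repr_single' (L.inv y))
  have m3 := repr_merge (l1 := y :: l) (l2 := [L.inv y]) hfull he1 (repr_single' (L.inv y))
  have m4 := repr_merge (l1 := [y]) (l2 := l ++ [L.inv y]) hfull (repr_single' y) he2
  have htrip : L.Represents [y, h, L.inv y] c :=
    repr_triple m1.1 m2.1 (by rw [m1.2]; exact m3.1) (by rw [m2.2]; exact m4.1)
      (by rw [m1.2]; exact m3.2) (by rw [m2.2]; exact m4.2)
  exact hHV.2.2 y hyV h hmem c htrip hcV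

end Ctx

section Ctx2
variable {Un : ℕ → Set G} {H V W : Set G}

theorem aux_HW (h1W : L.one ∈ W) (hWpow : L.setPow W 6 ⊆ V) {a : G} (ha : a ∈ W) : a ∈ V :=
  aux_V h1W hWpow (l := [a]) (by simp [ha]) (by simp) (repr_single' a)

theorem aux_Hmul (hHV : L.IsNormalSublocalGroup H V) {a b : G} (ha : a ∈ H) (hb : b ∈ H)
    (hO : (a, b) ∈ L.Omega) (hV : L.mul a b ∈ V) : L.mul a b ∈ H :=
  hHV.1.2.2.2.2.2.2 a ha b hb hO hV

theorem aux_Hinv (hstd : L.Std) (hHV : L.IsNormalSublocalGroup H V) {a : G} (ha : a ∈ H)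
    (hV : L.inv a ∈ V) : L.inv a ∈ H :=
  hHV.1.2.2.2.2.2.1 a ha (aux_lam hstd a) hV

theorem aux_pair_val (hUn : L.IsProdChain Un) (hW6 : W ⊆ Un 6) {a b : G} (ha : a ∈ W)
    (hb : b ∈ W) : L.Represents [a, b] (L.mul a b) :=
  repr_pair (aux_pairW hUn hW6 ha hb)

theorem aux_refl (hHV : L.IsNormalSublocalGroup H V) (hstd : L.Std) {a : G} :
    L.mul (L.inv a) a ∈ H := by
  rw [L.inv_mul_self a (aux_lam hstd a)]; exact hHV.1.1

theorem aux_symm (hstd : L.Std) (hUn : L.IsProdChain Un) (hHV : L.IsNormalSublocalGroup H V)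
    (h1W : L.one ∈ W) (hWsym : L.IsSymmetric W) (hW6 : W ⊆ Un 6) (hWpow : L.setPow W 6 ⊆ V)
    {a b : G} (ha : a ∈ W) (hb : b ∈ W) (h : L.mul (L.inv a) b ∈ H) :
    L.mul (L.inv b) a ∈ H := by
  have hstd2 := hstd.2 (L.inv a) b (aux_pairW hUn hW6 (aux_invW hWsym ha) hb)
  rw [aux_inv_inv hstd a] at hstd2
  have hV : L.mul (L.inv b) a ∈ V :=
    aux_V h1W hWpow (l := [L.inv b, a]) (by simp [aux_invW hWsym hb, ha]) (by simp)
      (aux_pair_val hUn hW6 (aux_invW hWsym hb) ha)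
  rw [← hstd2.2] at hV ⊢
  exact aux_Hinv hstd hHV h hV

theorem aux_trans (hstd : L.Std) (hUn : L.IsProdChain Un) (hHV : L.IsNormalSublocalGroup H V)
    (h1W : L.one ∈ W) (hWsym : L.IsSymmetric W) (hW6 : W ⊆ Un 6) (hWpow : L.setPow W 6 ⊆ V)
    {a b c : G} (ha : a ∈ W) (hb : b ∈ W) (hc : c ∈ W)
    (h1 : L.mul (L.inv a) b ∈ H) (h2 : L.mul (L.inv b) c ∈ H) :
    L.mul (L.inv a) c ∈ H := by
  have hia := aux_invW hWsym ha
  have hib := aux_invW hWsym hb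
  obtain ⟨d, hd⟩ := aux_ex hUn hW6 (l := [L.inv a, b, L.inv b, c])
    (by intro g hg; simp at hg; rcases hg with rfl | rfl | rfl | rfl; exacts [hia, hb, hib, hc])
    (by simp)
  have hcan : d = L.mul (L.inv a) c :=
    aux_cancel hstd hUn hWsym hW6 (l1 := [L.inv a]) (l2 := [c])
      (by simp [hia]) (by simp [hc]) hb (by simp) hd
      (aux_pair_val hUn hW6 hia hc)
  have hm := repr_merge (l1 := [L.inv a, b]) (l2 := [L.inv b, c]) hd
    (aux_pair_val hUn hW6 hia hb) (aux_pair_val hUn hW6 hib hc)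
  have hdV : d ∈ V := aux_V h1W hWpow
    (l := [L.inv a, b, L.inv b, c])
    (by intro g hg; simp at hg; rcases hg with rfl | rfl | rfl | rfl; exacts [hia, hb, hib, hc])
    (by simp) hd
  rw [← hcan, ← hm.2] at *
  exact aux_Hmul hHV h1 h2 hm.1 hdV

theorem aux_invwd (hstd : L.Std) (hUn : L.IsProdChain Un) (hHV : L.IsNormalSublocalGroup H V)
    (h1W : L.one ∈ W) (hWsym : L.IsSymmetric W) (hW6 : W ⊆ Un 6) (hWpow : L.setPow W 6 ⊆ V)
    {a b : G} (ha : a ∈ W) (hb : b ∈ W) (h : L.mul (L.inv a) b ∈ H) :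
    L.mul a (L.inv b) ∈ H := by
  have hib := aux_invW hWsym hb
  have hia := aux_invW hWsym ha
  have hk : L.mul (L.inv b) a ∈ H := aux_symm hstd hUn hHV h1W hWsym hW6 hWpow ha hb h
  obtain ⟨c4, hc4⟩ := aux_ex hUn hW6 (l := [a, L.inv b, a, L.inv a])
    (by intro g hg; simp at hg; rcases hg with rfl | rfl | rfl | rfl; exacts [ha, hib, ha, hia])
    (by simp)
  have hcan : c4 = L.mul a (L.inv b) :=
    aux_cancel hstd hUn hWsym hW6 (l1 := [a, L.inv b]) (l2 := [])
      (by simp [ha, hib]) (by simp) ha (by simp) hc4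
      (by rw [List.append_nil]; exact aux_pair_val hUn hW6 ha hib)
  rw [← hcan]
  exact aux_conj hstd hUn hHV h1W hWsym hW6 hWpow (l := [L.inv b, a]) ha
    (by simp [hib, ha]) (by simp) (aux_pair_val hUn hW6 hib ha) hk hc4

theorem aux_mulwd (hstd : L.Std) (hUn : L.IsProdChain Un) (hHV : L.IsNormalSublocalGroup H V)
    (h1W : L.one ∈ W) (hWsym : L.IsSymmetric W) (hW6 : W ⊆ Un 6) (hWpow : L.setPow W 6 ⊆ V)
    {a a' b b' : G} (ha : a ∈ W) (ha' : a' ∈ W) (hb : b ∈ W) (hb' : b' ∈ W)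
    (h1 : L.mul (L.inv a) a' ∈ H) (h2 : L.mul (L.inv b) b' ∈ H) :
    L.mul (L.inv (L.mul a b)) (L.mul a' b') ∈ H := by
  have hia := aux_invW hWsym ha
  have hib := aux_invW hWsym hb
  obtain ⟨c, hc⟩ := aux_ex hUn hW6 (l := [L.inv b, L.inv a, a', b'])
    (by intro g hg; simp at hg; rcases hg with rfl | rfl | rfl | rfl; exacts [hib, hia, ha', hb'])
    (by simp)
  have hm1 := repr_merge (l1 := [L.inv b, L.inv a]) (l2 := [a', b']) hc
    (aux_pair_val hUn hW6 hib hia) (aux_pair_val hUn hW6 ha' hb')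
  have hinv := hstd.2 a b (aux_pairW hUn hW6 ha hb)
  have hgoal : L.mul (L.inv (L.mul a b)) (L.mul a' b') = c := by rw [hinv.2]; exact hm1.2
  rw [hgoal]
  obtain ⟨c6, hc6⟩ := aux_ex hUn hW6 (l := [L.inv b, L.inv a, a', b, L.inv b, b'])
    (by intro g hg; simp at hg
        rcases hg with rfl | rfl | rfl | rfl | rfl | rfl
        exacts [hib, hia, ha', hb, hib, hb']) (by simp)
  have hcan : c6 = c :=
    aux_cancel hstd hUn hWsym hW6 (l1 := [L.inv b, L.inv a, a']) (l2 := [b'])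
      (by simp [hib, hia, ha']) (by simp [hb']) hb (by simp) hc6 hc
  obtain ⟨c4, hc4⟩ := aux_ex hUn hW6 (l := [L.inv b, L.inv a, a', b])
    (by intro g hg; simp at hg; rcases hg with rfl | rfl | rfl | rfl; exacts [hib, hia, ha', hb])
    (by simp)
  have hm2 := repr_merge (l1 := [L.inv b, L.inv a, a', b]) (l2 := [L.inv b, b']) hc6
    hc4 (aux_pair_val hUn hW6 hib hb')
  have hc4H : c4 ∈ H :=
    aux_conj hstd hUn hHV h1W hWsym hW6 hWpow (l := [L.inv a, a']) hib
      (by simp [hia, ha']) (by simp) (aux_pair_val hUn hW6 hia ha') h1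
      (by rw [show L.inv b :: [L.inv a, a'] ++ [L.inv (L.inv b)] =
            [L.inv b, L.inv a, a', L.inv (L.inv b)] from rfl, aux_inv_inv hstd b]; exact hc4)
  have hcV : c ∈ V := aux_V h1W hWpow (l := [L.inv b, L.inv a, a', b'])
    (by intro g hg; simp at hg; rcases hg with rfl | rfl | rfl | rfl; exacts [hib, hia, ha', hb'])
    (by simp) hc
  rw [← hcan, ← hm2.2] at *
  exact aux_Hmul hHV hc4H h2 hm2.1 hcV

end Ctx2

section Ctx3
variable {Un : ℕ → Set G} {H V W : Set G}

theorem aux_assoc_core (hstd : L.Std) (hUn : L.IsProdChain Un)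
    (hHV : L.IsNormalSublocalGroup H V)
    (h1W : L.one ∈ W) (hWsym : L.IsSymmetric W) (hW6 : W ⊆ Un 6) (hWpow : L.setPow W 6 ⊆ V)
    {x y z x'' y' u v z' : G}
    (hx : x ∈ W) (hy : y ∈ W) (hz : z ∈ W) (hx'' : x'' ∈ W) (hy' : y' ∈ W)
    (hu : u ∈ W) (hv : v ∈ W) (hz' : z' ∈ W)
    (hP : L.mul x y ∈ W) (hR : L.mul y' z ∈ W) (hs : L.mul u z' ∈ W) (ht : L.mul x'' v ∈ W)
    (e1 : L.mul (L.inv u) (L.mul x y) ∈ H)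
    (e5 : L.mul (L.inv z') z ∈ H)
    (e3 : L.mul (L.inv x) x'' ∈ H)
    (e4 : L.mul (L.inv y) y' ∈ H)
    (e2 : L.mul (L.inv (L.mul y' z)) v ∈ H) :
    L.mul (L.inv (L.mul u z')) (L.mul x'' v) ∈ H := by
  set P := L.mul x y with hPdef
  set R := L.mul y' z with hRdef
  set s := L.mul u z' with hsdef
  have hix := aux_invW hWsym hx
  have hiy := aux_invW hWsym hy
  have hiu := aux_invW hWsym hu
  have hiz' := aux_invW hWsym hz'
  have hiP := aux_invW hWsym hP
  have hiR := aux_invW hWsym hR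
  have his := aux_invW hWsym hs
  -- Step 1 : c3 = value [y⁻¹, x⁻¹, x'', y] ∈ H
  obtain ⟨c3, hc3⟩ := aux_ex hUn hW6 (l := [L.inv y, L.inv x, x'', y])
    (by intro g hg; simp at hg; rcases hg with rfl | rfl | rfl | rfl; exacts [hiy, hix, hx'', hy])
    (by simp)
  have hc3H : c3 ∈ H :=
    aux_conj hstd hUn hHV h1W hWsym hW6 hWpow (l := [L.inv x, x'']) hiy
      (by simp [hix, hx'']) (by simp) (aux_pair_val hUn hW6 hix hx'') e3
      (by rw [show L.inv y :: [L.inv x, x''] ++ [L.inv (L.inv y)] =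
            [L.inv y, L.inv x, x'', L.inv (L.inv y)] from rfl, aux_inv_inv hstd y]; exact hc3)
  -- Step 2 : D = value [y⁻¹, x⁻¹, x'', y'] ∈ H
  obtain ⟨D, hD⟩ := aux_ex hUn hW6 (l := [L.inv y, L.inv x, x'', y'])
    (by intro g hg; simp at hg; rcases hg with rfl | rfl | rfl | rfl; exacts [hiy, hix, hx'', hy'])
    (by simp)
  have hDH : D ∈ H := by
    obtain ⟨c6a, hc6a⟩ := aux_ex hUn hW6 (l := [L.inv y, L.inv x, x'', y, L.inv y, y'])
      (by intro g hg; simp at hg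
          rcases hg with rfl | rfl | rfl | rfl | rfl | rfl
          exacts [hiy, hix, hx'', hy, hiy, hy']) (by simp)
    have hcan : c6a = D :=
      aux_cancel hstd hUn hWsym hW6 (l1 := [L.inv y, L.inv x, x'']) (l2 := [y'])
        (by simp [hiy, hix, hx'']) (by simp [hy']) hy (by simp) hc6a hD
    have hm := repr_merge (l1 := [L.inv y, L.inv x, x'', y]) (l2 := [L.inv y, y']) hc6a
      hc3 (aux_pair_val hUn hW6 hiy hy')
    have hDV : D ∈ V := aux_V h1W hWpow (l := [L.inv y, L.inv x, x'', y'])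
      (by intro g hg; simp at hg
          rcases hg with rfl | rfl | rfl | rfl; exacts [hiy, hix, hx'', hy']) (by simp) hD
    rw [← hcan, ← hm.2] at *
    exact aux_Hmul hHV hc3H e4 hm.1 hDV
  -- Step 3 : E = value [P⁻¹, x'', y'] equals D
  obtain ⟨E, hE⟩ := aux_ex hUn hW6 (l := [L.inv P, x'', y'])
    (by intro g hg; simp at hg; rcases hg with rfl | rfl | rfl; exacts [hiP, hx'', hy'])
    (by simp)
  have hED : E = D := by
    have hmE := repr_merge (l1 := [L.inv P]) (l2 := [x'', y']) hE
      (repr_single' (L.inv P)) (aux_pair_val hUn hW6 hx'' hy')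
    have hmD := repr_merge (l1 := [L.inv y, L.inv x]) (l2 := [x'', y']) hD
      (aux_pair_val hUn hW6 hiy hix) (aux_pair_val hUn hW6 hx'' hy')
    have hiPf := (hstd.2 x y (aux_pairW hUn hW6 hx hy)).2
    rw [← hmE.2, ← hmD.2, hPdef, hiPf]
  -- Step 4 : C = value [u⁻¹, x'', y'] ∈ H
  obtain ⟨C, hC⟩ := aux_ex hUn hW6 (l := [L.inv u, x'', y'])
    (by intro g hg; simp at hg; rcases hg with rfl | rfl | rfl; exacts [hiu, hx'', hy'])
    (by simp)
  have hCH : C ∈ H := by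
    obtain ⟨c5a, hc5a⟩ := aux_ex hUn hW6 (l := [L.inv u, P, L.inv P, x'', y'])
      (by intro g hg; simp at hg
          rcases hg with rfl | rfl | rfl | rfl | rfl; exacts [hiu, hP, hiP, hx'', hy'])
      (by simp)
    have hcan : c5a = C :=
      aux_cancel hstd hUn hWsym hW6 (l1 := [L.inv u]) (l2 := [x'', y'])
        (by simp [hiu]) (by simp [hx'', hy']) hP (by simp) hc5a hC
    have hm := repr_merge (l1 := [L.inv u, P]) (l2 := [L.inv P, x'', y']) hc5a
      (aux_pair_val hUn hW6 hiu hP) hE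
    have hCV : C ∈ V := aux_V h1W hWpow (l := [L.inv u, x'', y'])
      (by intro g hg; simp at hg; rcases hg with rfl | rfl | rfl; exacts [hiu, hx'', hy'])
      (by simp) hC
    rw [← hcan, ← hm.2] at *
    exact aux_Hmul hHV e1 (hED ▸ hDH) hm.1 hCV
  -- Step 5 : B = value [z'⁻¹, u⁻¹, x'', y', z'] ∈ H
  obtain ⟨B, hB⟩ := aux_ex hUn hW6 (l := [L.inv z', L.inv u, x'', y', z'])
    (by intro g hg; simp at hg
        rcases hg with rfl | rfl | rfl | rfl | rfl; exacts [hiz', hiu, hx'', hy', hz'])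
    (by simp)
  have hBH : B ∈ H :=
    aux_conj hstd hUn hHV h1W hWsym hW6 hWpow (l := [L.inv u, x'', y']) hiz'
      (by intro g hg; simp at hg; rcases hg with rfl | rfl | rfl; exacts [hiu, hx'', hy'])
      (by simp) hC hCH
      (by rw [show L.inv z' :: [L.inv u, x'', y'] ++ [L.inv (L.inv z')] =
            [L.inv z', L.inv u, x'', y', L.inv (L.inv z')] from rfl, aux_inv_inv hstd z']
          exact hB)
  -- Step 6 : B' = value [s⁻¹, x'', y', z'] equals B
  obtain ⟨B', hB'⟩ := aux_ex hUn hW6 (l := [L.inv s, x'', y', z'])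
    (by intro g hg; simp at hg; rcases hg with rfl | rfl | rfl | rfl; exacts [his, hx'', hy', hz'])
    (by simp)
  have hB'B : B' = B := by
    obtain ⟨G1, hG1⟩ := aux_ex hUn hW6 (l := [x'', y', z'])
      (by intro g hg; simp at hg; rcases hg with rfl | rfl | rfl; exacts [hx'', hy', hz'])
      (by simp)
    have hm1 := repr_merge (l1 := [L.inv s]) (l2 := [x'', y', z']) hB'
      (repr_single' (L.inv s)) hG1
    have hm2 := repr_merge (l1 := [L.inv z', L.inv u]) (l2 := [x'', y', z']) hB
      (aux_pair_val hUn hW6 hiz' hiu) hG1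
    have hisf := (hstd.2 u z' (aux_pairW hUn hW6 hu hz')).2
    rw [← hm1.2, ← hm2.2, hsdef, hisf]
  -- Step 7 : A = value [s⁻¹, x'', y', z] ∈ H
  obtain ⟨A, hA⟩ := aux_ex hUn hW6 (l := [L.inv s, x'', y', z])
    (by intro g hg; simp at hg; rcases hg with rfl | rfl | rfl | rfl; exacts [his, hx'', hy', hz])
    (by simp)
  have hAH : A ∈ H := by
    obtain ⟨c6b, hc6b⟩ := aux_ex hUn hW6 (l := [L.inv s, x'', y', z', L.inv z', z])
      (by intro g hg; simp at hg
          rcases hg with rfl | rfl | rfl | rfl | rfl | rfl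
          exacts [his, hx'', hy', hz', hiz', hz]) (by simp)
    have hcan : c6b = A :=
      aux_cancel hstd hUn hWsym hW6 (l1 := [L.inv s, x'', y']) (l2 := [z])
        (by simp [his, hx'', hy']) (by simp [hz]) hz' (by simp) hc6b hA
    have hm := repr_merge (l1 := [L.inv s, x'', y', z']) (l2 := [L.inv z', z]) hc6b
      hB' (aux_pair_val hUn hW6 hiz' hz)
    have hAV : A ∈ V := aux_V h1W hWpow (l := [L.inv s, x'', y', z])
      (by intro g hg; simp at hg
          rcases hg with rfl | rfl | rfl | rfl; exacts [his, hx'', hy', hz]) (by simp) hA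
    rw [← hcan, ← hm.2] at *
    exact aux_Hmul hHV (hB'B ▸ hBH) e5 hm.1 hAV
  -- Step 8 : A'' = value [s⁻¹, x'', R] equals A
  obtain ⟨A'', hA''⟩ := aux_ex hUn hW6 (l := [L.inv s, x'', R])
    (by intro g hg; simp at hg; rcases hg with rfl | rfl | rfl; exacts [his, hx'', hR])
    (by simp)
  have hA''A : A'' = A := by
    obtain ⟨g2, hg2⟩ := aux_ex hUn hW6 (l := [L.inv s, x''])
      (by intro g hg; simp at hg; rcases hg with rfl | rfl; exacts [his, hx'']) (by simp)
    have hm1 := repr_merge (l1 := [L.inv s, x'']) (l2 := [R]) hA'' hg2 (repr_single' R)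
    have hm2 := repr_merge (l1 := [L.inv s, x'']) (l2 := [y', z]) hA hg2
      (aux_pair_val hUn hW6 hy' hz)
    rw [← hm1.2, ← hm2.2, hRdef]
  -- Step 9 : T3 = value [s⁻¹, x'', v] ∈ H
  obtain ⟨T3, hT3⟩ := aux_ex hUn hW6 (l := [L.inv s, x'', v])
    (by intro g hg; simp at hg; rcases hg with rfl | rfl | rfl; exacts [his, hx'', hv])
    (by simp)
  have hT3H : T3 ∈ H := by
    obtain ⟨c5b, hc5b⟩ := aux_ex hUn hW6 (l := [L.inv s, x'', R, L.inv R, v])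
      (by intro g hg; simp at hg
          rcases hg with rfl | rfl | rfl | rfl | rfl; exacts [his, hx'', hR, hiR, hv])
      (by simp)
    have hcan : c5b = T3 :=
      aux_cancel hstd hUn hWsym hW6 (l1 := [L.inv s, x'']) (l2 := [v])
        (by simp [his, hx'']) (by simp [hv]) hR (by simp) hc5b hT3
    have hm := repr_merge (l1 := [L.inv s, x'', R]) (l2 := [L.inv R, v]) hc5b
      hA'' (aux_pair_val hUn hW6 hiR hv)
    have hT3V : T3 ∈ V := aux_V h1W hWpow (l := [L.inv s, x'', v])
      (by intro g hg; simp at hg; rcases hg with rfl | rfl | rfl; exacts [his, hx'', hv])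
      (by simp) hT3
    rw [← hcan, ← hm.2] at *
    exact aux_Hmul hHV (hA''A ▸ hAH) e2 hm.1 hT3V
  -- Step 10 : conclude
  have hm := repr_merge (l1 := [L.inv s]) (l2 := [x'', v]) hT3
    (repr_single' (L.inv s)) (aux_pair_val hUn hW6 hx'' hv)
  rw [← hm.2] at hT3H
  exact hT3H

end Ctx3

section Ctx4
variable {Un : ℕ → Set G} {H V W : Set G}

theorem aux_eqv (hstd : L.Std) (hUn : L.IsProdChain Un) (hHV : L.IsNormalSublocalGroup H V)
    (h1W : L.one ∈ W) (hWsym : L.IsSymmetric W) (hW6 : W ⊆ Un 6) (hWpow : L.setPow W 6 ⊆ V) :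
    Equivalence (L.quotRel H W) := by
  refine ⟨fun a => aux_refl hHV hstd, fun {a b} h => ?_, fun {a b c} h1 h2 => ?_⟩
  · exact aux_symm hstd hUn hHV h1W hWsym hW6 hWpow a.2 b.2 h
  · exact aux_trans hstd hUn hHV h1W hWsym hW6 hWpow a.2 b.2 c.2 h1 h2

theorem aux_exact (hstd : L.Std) (hUn : L.IsProdChain Un) (hHV : L.IsNormalSublocalGroup H V)
    (h1W : L.one ∈ W) (hWsym : L.IsSymmetric W) (hW6 : W ⊆ Un 6) (hWpow : L.setPow W 6 ⊆ V)
    (a b : ↥W) (h : Quot.mk (L.quotRel H W) a = Quot.mk (L.quotRel H W) b) :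
    L.mul (L.inv ↑a) ↑b ∈ H :=
  (aux_eqv hstd hUn hHV h1W hWsym hW6 hWpow).eqvGen_iff.mp (Quot.eqvGen_exact h)

end Ctx4

/-- The quotient multiplication on `W/E_H`. -/
noncomputable def quotMul (L : LocalGroup G) (H W : Set G) :
    L.QuotCarrier H W → L.QuotCarrier H W → L.QuotCarrier H W := fun q1 q2 =>
  letI := Classical.propDecidable
  if h : ∃ x y : ↥W, ((x : G), (y : G)) ∈ L.Omega ∧ L.mul ↑x ↑y ∈ W ∧
      (q1, q2) = (Quot.mk (L.quotRel H W) x, Quot.mk (L.quotRel H W) y)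
  then Quot.mk (L.quotRel H W)
    ⟨L.mul ↑h.choose ↑h.choose_spec.choose, h.choose_spec.choose_spec.2.1⟩
  else q2

section Ctx5
variable {Un : ℕ → Set G} {H V W : Set G}

theorem quotMul_spec (hstd : L.Std) (hUn : L.IsProdChain Un)
    (hHV : L.IsNormalSublocalGroup H V)
    (h1W : L.one ∈ W) (hWsym : L.IsSymmetric W) (hW6 : W ⊆ Un 6) (hWpow : L.setPow W 6 ⊆ V)
    (x y : ↥W) (hO : ((x : G), (y : G)) ∈ L.Omega) (hm : L.mul ↑x ↑y ∈ W) :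
    quotMul L H W (Quot.mk (L.quotRel H W) x) (Quot.mk (L.quotRel H W) y) =
      Quot.mk (L.quotRel H W) ⟨L.mul ↑x ↑y, hm⟩ := by
  have hcond : ∃ a b : ↥W, ((a : G), (b : G)) ∈ L.Omega ∧ L.mul ↑a ↑b ∈ W ∧
      ((Quot.mk (L.quotRel H W) x, Quot.mk (L.quotRel H W) y) : _ × _) =
        (Quot.mk (L.quotRel H W) a, Quot.mk (L.quotRel H W) b) := ⟨x, y, hO, hm, rfl⟩
  rw [quotMul, dif_pos hcond]
  obtain ⟨hO', hm', hpair⟩ := hcond.choose_spec.choose_spec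
  rw [Prod.mk.injEq] at hpair
  refine Quot.sound ?_
  have h1 : L.mul (L.inv ↑hcond.choose) ↑x ∈ H :=
    aux_exact hstd hUn hHV h1W hWsym hW6 hWpow _ _ hpair.1.symm
  have h2 : L.mul (L.inv ↑hcond.choose_spec.choose) ↑y ∈ H :=
    aux_exact hstd hUn hHV h1W hWsym hW6 hWpow _ _ hpair.2.symm
  exact aux_mulwd hstd hUn hHV h1W hWsym hW6 hWpow
    hcond.choose.2 x.2 hcond.choose_spec.choose.2 y.2 h1 h2

theorem aux_openMap (hstd : L.Std) (hUn : L.IsProdChain Un)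
    (hHV : L.IsNormalSublocalGroup H V) (hWo : IsOpen W)
    (h1W : L.one ∈ W) (hWsym : L.IsSymmetric W) (hW6 : W ⊆ Un 6) (hWpow : L.setPow W 6 ⊆ V) :
    IsOpenMap (Quot.mk (L.quotRel H W) : ↥W → L.QuotCarrier H W) := by
  intro O hO
  rw [isOpen_coinduced]
  obtain ⟨U0, hU0, hOU⟩ := isOpen_induced_iff.mp hO
  rw [isOpen_iff_forall_mem_open]
  intro a ha
  obtain ⟨o, hoO, hoeq⟩ := ha
  have hia := aux_invW hWsym a.2
  have hHmem : L.mul (L.inv ↑a) ↑o ∈ H := by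
    have := aux_exact hstd hUn hHV h1W hWsym hW6 hWpow o a hoeq
    exact aux_symm hstd hUn hHV h1W hWsym hW6 hWpow o.2 a.2 this
  obtain ⟨c, hc⟩ := aux_ex hUn hW6 (l := [(a : G), L.inv ↑a, ↑o])
    (by intro g hg; simp at hg; rcases hg with rfl | rfl | rfl; exacts [a.2, hia, o.2])
    (by simp)
  have hco : c = ↑o :=
    aux_cancel hstd hUn hWsym hW6 (l1 := []) (l2 := [(o : G)]) (by simp) (by simp [o.2]) a.2
      (by simp) hc (repr_single' (o : G))
  have hmer := repr_merge (l1 := [(a : G)]) (l2 := [L.inv ↑a, ↑o]) hc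
    (repr_single' (a : G)) (aux_pair_val hUn hW6 hia o.2)
  refine ⟨Subtype.val ⁻¹'
    ((fun g => (g, L.mul (L.inv ↑a) ↑o)) ⁻¹'
      (L.Omega ∩ (fun q : G × G => L.mul q.1 q.2) ⁻¹' (W ∩ U0))),
    ?_, ?_, ?_⟩
  · -- subset of the saturation
    intro b hb
    obtain ⟨hbO, hbW, hbU⟩ :
        ((b : G), L.mul (L.inv ↑a) ↑o) ∈ L.Omega ∧
          L.mul ↑b (L.mul (L.inv ↑a) ↑o) ∈ W ∧ L.mul ↑b (L.mul (L.inv ↑a) ↑o) ∈ U0 :=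
      ⟨hb.1, hb.2.1, hb.2.2⟩
    refine ⟨⟨L.mul ↑b (L.mul (L.inv ↑a) ↑o), hbW⟩, ?_, (Quot.sound ?_).symm⟩
    · rw [← hOU]; exact hbU
    · have hib := aux_invW hWsym b.2
      have hiib : L.inv (L.inv ↑b) ∈ W := aux_invW hWsym hib
      obtain ⟨c4, hc4⟩ := aux_ex hUn hW6
        (l := [L.inv ↑b, L.inv (L.inv ↑b), L.inv ↑a, ↑o])
        (by intro g hg; simp at hg
            rcases hg with rfl | rfl | rfl | rfl; exacts [hib, hiib, hia, o.2]) (by simp)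
      have hc4H : c4 = L.mul (L.inv ↑a) ↑o :=
        aux_cancel hstd hUn hWsym hW6 (l1 := []) (l2 := [L.inv ↑a, ↑o]) (by simp)
          (by simp [hia, o.2]) hib (by simp) hc4 (aux_pair_val hUn hW6 hia o.2)
      obtain ⟨w3, hw3⟩ := aux_ex hUn hW6 (l := [L.inv (L.inv ↑b), L.inv ↑a, ↑o])
        (by intro g hg; simp at hg; rcases hg with rfl | rfl | rfl; exacts [hiib, hia, o.2])
        (by simp)
      have hm1 := repr_merge (l1 := [L.inv ↑b]) (l2 := [L.inv (L.inv ↑b), L.inv ↑a, ↑o]) hc4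
        (repr_single' (L.inv ↑b)) hw3
      have hm2 := repr_merge (l1 := [L.inv (L.inv ↑b)]) (l2 := [L.inv ↑a, ↑o]) hw3
        (repr_single' _) (aux_pair_val hUn hW6 hia o.2)
      have hw3v : w3 = L.mul ↑b (L.mul (L.inv ↑a) ↑o) := by
        rw [← hm2.2, aux_inv_inv hstd]
      show L.mul (L.inv ↑b) (L.mul ↑b (L.mul (L.inv ↑a) ↑o)) ∈ H
      rw [← hw3v, hm1.2, hc4H]
      exact hHmem
  · -- openness
    exact IsOpen.preimage continuous_subtype_val (IsOpen.preimage
      (continuous_id.prodMk continuous_const)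
      (ContinuousOn.isOpen_inter_preimage L.continuousOn_mul L.isOpen_Omega
        (hWo.inter hU0)))
  · -- membership of a
    refine ⟨hmer.1, ?_, ?_⟩
    · show L.mul ↑a (L.mul (L.inv ↑a) ↑o) ∈ W
      rw [hmer.2, hco]; exact o.2
    · show L.mul ↑a (L.mul (L.inv ↑a) ↑o) ∈ U0
      rw [hmer.2, hco]
      have : o ∈ Subtype.val ⁻¹' U0 := by rw [hOU]; exact hoO
      exact this

end Ctx5

end LocalGroup

open LocalGroup

/-- the local coset space `(G/H)_W` carries a local group structure making
the canonical projection a morphism. -/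
theorem statement_14 {G : Type*} [TopologicalSpace G] [T2Space G]
    (L : LocalGroup G) (hstd : L.Std) (Un : ℕ → Set G) (hUn : L.IsProdChain Un)
    (H V : Set G) (hHV : L.IsNormalSublocalGroup H V)
    (W : Set G) (hWo : IsOpen W) (h1W : L.one ∈ W) (hWsym : L.IsSymmetric W)
    (hW6 : W ⊆ Un 6) (hWpow : L.setPow W 6 ⊆ V) :
    ∃ Q : LocalGroup (L.QuotCarrier H W), L.IsQuotStructure H W h1W Q ∧
      Continuous (Quot.mk (L.quotRel H W)) ∧
      (∀ x : ↥W, L.inv ↑x ∈ W → Quot.mk (L.quotRel H W) x ∈ Q.Lambda) ∧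
      ∀ x y : ↥W, ((x : G), (y : G)) ∈ L.Omega → L.mul ↑x ↑y ∈ W →
        (Quot.mk (L.quotRel H W) x, Quot.mk (L.quotRel H W) y) ∈ Q.Omega := by
  have hiW : ∀ a : ↥W, L.inv ↑a ∈ W := fun a => aux_invW hWsym a.2
  have hspec := fun x y hO hm => quotMul_spec hstd hUn hHV h1W hWsym hW6 hWpow x y hO hm
  have hopen := aux_openMap hstd hUn hHV hWo h1W hWsym hW6 hWpow
  have hexact := fun a b h => aux_exact hstd hUn hHV h1W hWsym hW6 hWpow a b h
  have hinvc : Continuous L.inv := by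
    have h := L.continuousOn_inv
    rw [hstd.1] at h
    exact continuousOn_univ.mp h
  refine ⟨{
    one := Quot.mk (L.quotRel H W) ⟨L.one, h1W⟩
    Lambda := Set.univ
    Omega := {q | ∃ x y : ↥W, ((x : G), (y : G)) ∈ L.Omega ∧ L.mul ↑x ↑y ∈ W ∧
        q = (Quot.mk (L.quotRel H W) x, Quot.mk (L.quotRel H W) y)}
    inv := Quot.lift (fun a : ↥W => Quot.mk (L.quotRel H W) ⟨L.inv ↑a, hiW a⟩)
      (fun a b hab => Quot.sound (by
        have h := aux_invwd hstd hUn hHV h1W hWsym hW6 hWpow a.2 b.2 hab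
        show L.mul (L.inv (L.inv ↑a)) (L.inv ↑b) ∈ H
        rw [aux_inv_inv hstd]; exact h))
    mul := quotMul L H W
    isOpen_Lambda := isOpen_univ
    isOpen_Omega := by
      have hS : IsOpen {p : ↥W × ↥W | ((p.1 : G), (p.2 : G)) ∈ L.Omega ∧ L.mul ↑p.1 ↑p.2 ∈ W} :=
        IsOpen.preimage
          ((continuous_subtype_val.comp continuous_fst).prodMk
            (continuous_subtype_val.comp continuous_snd))
          (ContinuousOn.isOpen_inter_preimage L.continuousOn_mul L.isOpen_Omega hWo)
      have himg := (hopen.prodMap hopen) _ hS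
      convert himg using 1
      ext ⟨q1, q2⟩
      constructor
      · rintro ⟨x, y, hO, hm, heq⟩
        exact ⟨(x, y), ⟨hO, hm⟩, heq.symm⟩
      · rintro ⟨⟨x, y⟩, ⟨hO, hm⟩, heq⟩
        exact ⟨x, y, hO, hm, heq.symm⟩
    one_mem_Lambda := trivial
    pair_one_left := by
      intro q
      obtain ⟨w, rfl⟩ := Quot.exists_rep q
      exact ⟨⟨L.one, h1W⟩, w, L.pair_one_left ↑w,
        (by rw [L.one_mul]; exact w.2), rfl⟩
    pair_one_right := by
      intro q
      obtain ⟨w, rfl⟩ := Quot.exists_rep q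
      exact ⟨w, ⟨L.one, h1W⟩, L.pair_one_right ↑w,
        (by rw [L.mul_one]; exact w.2), rfl⟩
    continuousOn_inv := by
      apply Continuous.continuousOn
      exact continuous_quot_lift _
        (continuous_quot_mk.comp ((hinvc.comp continuous_subtype_val).subtype_mk _))
    continuousOn_mul := by
      rw [continuousOn_iff]
      rintro ⟨q1, q2⟩ ⟨x, y, hO, hm, heq⟩ t ht hft
      rw [Prod.mk.injEq] at heq
      obtain ⟨rfl, rfl⟩ := heq
      obtain ⟨t'', ht'', htpre⟩ := isOpen_induced_iff.mp (ht.preimage continuous_quot_mk)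
      have hft' : quotMul L H W (Quot.mk (L.quotRel H W) x) (Quot.mk (L.quotRel H W) y) ∈ t := hft
      rw [hspec x y hO hm] at hft'
      have hxyT : L.mul ↑x ↑y ∈ t'' := by
        have h2 : (⟨L.mul ↑x ↑y, hm⟩ : ↥W) ∈ Subtype.val ⁻¹' t'' := by
          rw [htpre]; exact hft'
        exact h2
      have hTopen : IsOpen ((fun p : ↥W × ↥W => ((p.1 : G), (p.2 : G))) ⁻¹'
          (L.Omega ∩ (fun q : G × G => L.mul q.1 q.2) ⁻¹' (W ∩ t''))) :=
        IsOpen.preimage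
          ((continuous_subtype_val.comp continuous_fst).prodMk
            (continuous_subtype_val.comp continuous_snd))
          (ContinuousOn.isOpen_inter_preimage L.continuousOn_mul L.isOpen_Omega
            (hWo.inter ht''))
      refine ⟨Prod.map (Quot.mk (L.quotRel H W)) (Quot.mk (L.quotRel H W)) '' _,
        (hopen.prodMap hopen) _ hTopen, ⟨(x, y), ⟨hO, hm, hxyT⟩, rfl⟩, ?_⟩
      rintro ⟨p1, p2⟩ ⟨⟨⟨a, b⟩, ⟨hO', hmW, hmt⟩, heq'⟩, -⟩
      have h1 : Quot.mk (L.quotRel H W) a = p1 := congrArg Prod.fst heq'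
      have h2 : Quot.mk (L.quotRel H W) b = p2 := congrArg Prod.snd heq'
      show quotMul L H W p1 p2 ∈ t
      rw [← h1, ← h2, hspec a b hO' hmW]
      have h3 : (⟨L.mul ↑a ↑b, hmW⟩ : ↥W) ∈ Subtype.val ⁻¹' t'' := hmt
      rw [htpre] at h3
      exact h3
    one_mul := by
      intro q
      obtain ⟨w, rfl⟩ := Quot.exists_rep q
      rw [hspec ⟨L.one, h1W⟩ w (L.pair_one_left ↑w) (by rw [L.one_mul]; exact w.2)]
      exact congrArg _ (Subtype.ext (L.one_mul ↑w))
    mul_one := by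
      intro q
      obtain ⟨w, rfl⟩ := Quot.exists_rep q
      rw [hspec w ⟨L.one, h1W⟩ (L.pair_one_right ↑w) (by rw [L.mul_one]; exact w.2)]
      exact congrArg _ (Subtype.ext (L.mul_one ↑w))
    mem_inv_right := by
      rintro q -
      obtain ⟨w, rfl⟩ := Quot.exists_rep q
      exact ⟨w, ⟨L.inv ↑w, hiW w⟩, aux_pairW hUn hW6 w.2 (hiW w),
        (by rw [L.mul_inv_self ↑w (aux_lam hstd ↑w)]; exact h1W), rfl⟩
    mem_inv_left := by
      rintro q -
      obtain ⟨w, rfl⟩ := Quot.exists_rep q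
      exact ⟨⟨L.inv ↑w, hiW w⟩, w, aux_pairW hUn hW6 (hiW w) w.2,
        (by rw [L.inv_mul_self ↑w (aux_lam hstd ↑w)]; exact h1W), rfl⟩
    mul_inv_self := by
      rintro q -
      obtain ⟨w, rfl⟩ := Quot.exists_rep q
      show quotMul L H W (Quot.mk (L.quotRel H W) w)
          (Quot.mk (L.quotRel H W) ⟨L.inv ↑w, hiW w⟩) = _
      rw [hspec w ⟨L.inv ↑w, hiW w⟩ (aux_pairW hUn hW6 w.2 (hiW w))
        (by rw [L.mul_inv_self ↑w (aux_lam hstd ↑w)]; exact h1W)]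
      exact congrArg _ (Subtype.ext (L.mul_inv_self ↑w (aux_lam hstd ↑w)))
    inv_mul_self := by
      rintro q -
      obtain ⟨w, rfl⟩ := Quot.exists_rep q
      show quotMul L H W (Quot.mk (L.quotRel H W) ⟨L.inv ↑w, hiW w⟩)
          (Quot.mk (L.quotRel H W) w) = _
      rw [hspec ⟨L.inv ↑w, hiW w⟩ w (aux_pairW hUn hW6 (hiW w) w.2)
        (by rw [L.inv_mul_self ↑w (aux_lam hstd ↑w)]; exact h1W)]
      exact congrArg _ (Subtype.ext (L.inv_mul_self ↑w (aux_lam hstd ↑w)))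
    assoc := by
      rintro q1 q2 q3 ⟨x, y, hOxy, hPW, hp12⟩ ⟨y', z, hOyz, hRW, hp23⟩ h3 h4
      rw [Prod.mk.injEq] at hp12
      obtain ⟨rfl, rfl⟩ := hp12
      rw [Prod.mk.injEq] at hp23
      obtain ⟨hyy', rfl⟩ := hp23
      rw [hspec x y hOxy hPW] at h3
      rw [hyy', hspec y' z hOyz hRW] at h4
      obtain ⟨u, z', hOuz, hsW, hp3⟩ := h3
      rw [Prod.mk.injEq] at hp3
      obtain ⟨x'', v, hOxv, htW, hp4⟩ := h4
      rw [Prod.mk.injEq] at hp4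
      rw [hspec x y hOxy hPW, hyy', hspec y' z hOyz hRW, hp3.1, hp3.2, hp4.1, hp4.2,
        hspec u z' hOuz hsW, hspec x'' v hOxv htW]
      refine Quot.sound ?_
      exact aux_assoc_core hstd hUn hHV h1W hWsym hW6 hWpow
        x.2 y.2 z.2 x''.2 y'.2 u.2 v.2 z'.2 hPW hRW hsW htW
        (hexact u ⟨L.mul ↑x ↑y, hPW⟩ hp3.1.symm)
        (hexact z' z hp3.2.symm)
        (hexact x x'' hp4.1)
        (hexact y y' hyy')
        (hexact ⟨L.mul ↑y' ↑z, hRW⟩ v hp4.2) },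
    ⟨rfl, rfl, fun x hx => rfl, rfl, fun x y hO hm => hspec x y hO hm⟩,
    continuous_quot_mk,
    fun x _ => trivial,
    fun x y hO hm => ⟨x, y, hO, hm, rfl⟩⟩
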